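/- Let the primed and unprimed 7-tuples be related by the base-change formulas for TLb_7 with A_0B_1 ≠ 0, and assume c_{23} = 0, c_{11} ≠ 0, c_{12} ≠ 0 (subset U_7^13). Then (c'_{12}/c'_{11})^8 (4c'_{00}c'_{11} - c'^2_{01})^3 = (c_{12}/c_{11})^8 (4c_{00}c_{11} - c^2_{01})^3, i.e., the function f(C) = (c_{12}/c_{11})^8 (4c_{00}c_{11}-c_{01}²)³ is invariant under the base change on this subset. -/

import Mathlib

/-- Invariance of f(C) = (c₁₂/c₁₁)⁸(4c₀₀c₁₁ - c₀₁²)³ under the TLb₇ base change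
on the subset U₇¹³: c₂₃ = 0, c₁₁ ≠ 0, c₁₂ ≠ 0. -/
theorem TLb7_U13_invariant (A0 A1 B1 : ℂ)
    (c00 c01 c11 c12 c23 c00' c01' c11' c12' : ℂ)
    (hA : A0 * B1 ≠ 0)
    (h00 : c00' = (A0^2 * c00 + A0 * A1 * c01 + A1^2 * c11) / (A0^5 * B1))
    (h01 : c01' = (A0 * c01 + 2 * A1 * c11) / A0^5)
    (h11 : c11' = B1 * c11 / A0^5)
    (h12 : c12' = B1 * c12 / A0^2)
    (hc23 : c23 = 0) (hc11 : c11 ≠ 0) (hc12 : c12 ≠ 0) :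
    (c12' / c11')^8 * (4 * c00' * c11' - c01'^2)^3
      = (c12 / c11)^8 * (4 * c00 * c11 - c01^2)^3 := by
  have hA0 : A0 ≠ 0 := fun h => hA (by simp [h])
  have hB1 : B1 ≠ 0 := fun h => hA (by simp [h])
  subst h00 h01 h11 h12
  have e1 : B1 * c12 / A0 ^ 2 / (B1 * c11 / A0 ^ 5) = A0^3 * (c12 / c11) := by
    field_simp
  have e2 : 4 * ((A0 ^ 2 * c00 + A0 * A1 * c01 + A1 ^ 2 * c11) / (A0 ^ 5 * B1)) * (B1 * c11 / A0 ^ 5) -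
      ((A0 * c01 + 2 * A1 * c11) / A0 ^ 5) ^ 2 = (4 * c00 * c11 - c01 ^ 2) / A0^8 := by
    rw [eq_div_iff (pow_ne_zero 8 hA0)]
    field_simp
    have h20 : A0^20 * A0⁻¹^20 = 1 := by
      rw [← mul_pow, mul_inv_cancel₀ hA0, one_pow]
    have hB : B1 * B1⁻¹ = 1 := mul_inv_cancel₀ hB1
    ring
  rw [e1, e2]
  field_simp
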